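/- arXiv:2605.07698 — 5 statements merged into one kernel-verified Lean document; each statement's English description precedes it below -/
import Mathlib

section
/- Under the non-degeneracy assumption that every prefix w of some string of L with positive p-mass and length less than T satisfies ∑_{y∈A(w)} p(y|w) > 0, the locally projected sequence law μ_proj (defined as the product over t of the masked-renormalized kernels, with each factor taken to be 0 whenever its conditioning prefix has zero p-mass or its token lies outside the valid set) is a probability mass function on V^T, and every x ∈ V^T with μ_proj(x) > 0 belongs to L. -/
open Finset
open scoped Classical

noncomputable section

/-- `w ∈ V^t` is the length-`t` prefix of `x ∈ V^T`. -/
def PrefMatch {V : Type*} {T t : ℕ} (ht : t ≤ T) (w : Fin t → V) (x : Fin T → V) : Prop :=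
  ∀ i : Fin t, x (Fin.castLE ht i) = w i

/-- Mass of the prefix `w` under a law `p` on `V^T`: `Pr_{X∼p}[X_{1:t} = w]`. -/
def prefMass {V : Type*} [Fintype V] {T t : ℕ} (p : (Fin T → V) → ℝ) (ht : t ≤ T)
    (w : Fin t → V) : ℝ :=
  ∑ x : Fin T → V, if PrefMatch ht w x then p x else 0

/-- Conditional next-token probability `p(y | w)`. -/
def condP {V : Type*} [Fintype V] {T t : ℕ} (p : (Fin T → V) → ℝ) (ht : t + 1 ≤ T)
    (w : Fin t → V) (y : V) : ℝ :=
  prefMass p ht (Fin.snoc w y) / prefMass p (Nat.le_of_succ_le ht) w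

/-- Mass of strings of `L` extending prefix `w`: `Pr_{X∼p}[X ∈ L ∧ X_{1:t} = w]`. -/
def lMass {V : Type*} [Fintype V] {T t : ℕ} (p : (Fin T → V) → ℝ)
    (L : Finset (Fin T → V)) (ht : t ≤ T) (w : Fin t → V) : ℝ :=
  ∑ x ∈ L, if PrefMatch ht w x then p x else 0

/-- Future validity `Φ(y | w) = Pr_{X∼p}[X ∈ L | X_{1:t+1} = w·y]` when the
prefix `w·y` has positive `p`-mass, and `0` otherwise. -/
def Phi {V : Type*} [Fintype V] {T t : ℕ} (p : (Fin T → V) → ℝ)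
    (L : Finset (Fin T → V)) (ht : t + 1 ≤ T) (w : Fin t → V) (y : V) : ℝ :=
  if 0 < prefMass p ht (Fin.snoc w y)
  then lMass p L ht (Fin.snoc w y) / prefMass p ht (Fin.snoc w y)
  else 0

/-- The locally valid next-token set `A(w)`. -/
def validSet {V : Type*} [Fintype V] {T t : ℕ} (L : Finset (Fin T → V))
    (ht : t + 1 ≤ T) (w : Fin t → V) : Finset V :=
  Finset.univ.filter (fun y => ∃ x ∈ L, PrefMatch ht (Fin.snoc w y) x)

/-- The locally projected kernel `μ_proj(y | w)`, taken to be `0` whenever the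
conditioning prefix has zero `p`-mass or the token is locally invalid. -/
def projKernel {V : Type*} [Fintype V] {T t : ℕ} (p : (Fin T → V) → ℝ)
    (L : Finset (Fin T → V)) (ht : t + 1 ≤ T) (w : Fin t → V) (y : V) : ℝ :=
  if 0 < prefMass p (Nat.le_of_succ_le ht) w ∧ y ∈ validSet L ht w
  then condP p ht w y / ∑ y' ∈ validSet L ht w, condP p ht w y'
  else 0

/-- The length-`t` prefix of `x`. -/
def pre {V : Type*} {T : ℕ} (x : Fin T → V) (t : ℕ) (ht : t ≤ T) : Fin t → V :=
  fun i => x (Fin.castLE ht i)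

/-- The locally projected sequence law `μ_proj(x) = ∏_t μ_proj(x_{t+1} | x_{1:t})`. -/
def muProj {V : Type*} [Fintype V] {T : ℕ} (p : (Fin T → V) → ℝ)
    (L : Finset (Fin T → V)) (x : Fin T → V) : ℝ :=
  ∏ t : Fin T, projKernel p L t.isLt (pre x t.val (Nat.le_of_lt t.isLt)) (x t)


section Aux

variable {V : Type*} [Fintype V] {T : ℕ}

lemma prefMass_nonneg (p : (Fin T → V) → ℝ) (hp0 : ∀ x, 0 ≤ p x) {t : ℕ} (ht : t ≤ T)
    (w : Fin t → V) : 0 ≤ prefMass p ht w :=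
  Finset.sum_nonneg fun x _ => by by_cases h : PrefMatch ht w x <;> simp [h, hp0 x]

lemma condP_nonneg (p : (Fin T → V) → ℝ) (hp0 : ∀ x, 0 ≤ p x) {t : ℕ} (ht : t + 1 ≤ T)
    (w : Fin t → V) (y : V) : 0 ≤ condP p ht w y :=
  div_nonneg (prefMass_nonneg p hp0 _ _) (prefMass_nonneg p hp0 _ _)

lemma projKernel_nonneg (p : (Fin T → V) → ℝ) (hp0 : ∀ x, 0 ≤ p x) (L : Finset (Fin T → V))
    {t : ℕ} (ht : t + 1 ≤ T) (w : Fin t → V) (y : V) : 0 ≤ projKernel p L ht w y := by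
  unfold projKernel
  split
  · exact div_nonneg (condP_nonneg p hp0 _ _ _)
      (Finset.sum_nonneg fun y' _ => condP_nonneg p hp0 _ _ _)
  · exact le_refl 0

/-- Partial product of the projected kernels along a prefix. -/
def partialMu (p : (Fin T → V) → ℝ) (L : Finset (Fin T → V)) {t : ℕ} (ht : t ≤ T)
    (w : Fin t → V) : ℝ :=
  ∏ s : Fin t, projKernel p L (Nat.lt_of_lt_of_le s.isLt ht)
    (fun i : Fin s.val => w (Fin.castLE s.isLt.le i)) (w s)

lemma partialMu_nonneg (p : (Fin T → V) → ℝ) (hp0 : ∀ x, 0 ≤ p x) (L : Finset (Fin T → V))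
    {t : ℕ} (ht : t ≤ T) (w : Fin t → V) : 0 ≤ partialMu p L ht w :=
  Finset.prod_nonneg fun s _ => projKernel_nonneg p hp0 L _ _ _

lemma snoc_castLE {t : ℕ} (w : Fin t → V) (y : V) {s : ℕ} (hs : s ≤ t) (h' : s ≤ t + 1)
    (i : Fin s) : (Fin.snoc w y : Fin (t + 1) → V) (Fin.castLE h' i) = w (Fin.castLE hs i) := by
  have h : (Fin.castLE h' i) = Fin.castSucc (Fin.castLE hs i) := by ext; simp
  rw [h]
  rw [Fin.snoc_castSucc]

lemma partialMu_succ (p : (Fin T → V) → ℝ) (L : Finset (Fin T → V)) {t : ℕ}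
    (ht : t + 1 ≤ T) (w : Fin t → V) (y : V) :
    partialMu p L ht (Fin.snoc w y) =
      partialMu p L (Nat.le_of_succ_le ht) w * projKernel p L ht w y := by
  unfold partialMu
  rw [Fin.prod_univ_castSucc]
  congr 1
  · refine Finset.prod_congr rfl fun s _ => ?_
    have h1 : (Fin.snoc w y : Fin (t + 1) → V) (Fin.castSucc s) = w s := by simp
    have h2 : (fun i : Fin (Fin.castSucc s).val =>
        (Fin.snoc w y : Fin (t + 1) → V) (Fin.castLE (Fin.castSucc s).isLt.le i)) =
        (fun i : Fin s.val => w (Fin.castLE s.isLt.le i)) := by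
      funext i
      exact snoc_castLE w y s.isLt.le _ i
    rw [h2, h1]
  · have h1 : (Fin.snoc w y : Fin (t + 1) → V) (Fin.last t) = y := by simp
    have h2 : (fun i : Fin (Fin.last t).val =>
        (Fin.snoc w y : Fin (t + 1) → V) (Fin.castLE (Fin.last t).isLt.le i)) = w := by
      funext i
      rw [snoc_castLE w y le_rfl _ i]
      congr 1
    rw [h2, h1]

lemma prefMatch_of_snoc {t : ℕ} (ht : t + 1 ≤ T) (w : Fin t → V) (y : V) (x : Fin T → V)
    (h : PrefMatch ht (Fin.snoc w y) x) : PrefMatch (Nat.le_of_succ_le ht) w x := by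
  intro i
  have := h (Fin.castSucc i)
  rwa [Fin.snoc_castSucc, show Fin.castLE ht (Fin.castSucc i) =
    Fin.castLE (Nat.le_of_succ_le ht) i from Fin.ext rfl] at this

lemma kernel_sum_one (p : (Fin T → V) → ℝ) (L : Finset (Fin T → V)) {t : ℕ}
    (ht : t + 1 ≤ T) (w : Fin t → V)
    (hpos : 0 < prefMass p (Nat.le_of_succ_le ht) w)
    (hS : 0 < ∑ y ∈ validSet L ht w, condP p ht w y) :
    ∑ y : V, projKernel p L ht w y = 1 := by
  unfold projKernel
  have : ∀ y : V, (if 0 < prefMass p (Nat.le_of_succ_le ht) w ∧ y ∈ validSet L ht w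
      then condP p ht w y / ∑ y' ∈ validSet L ht w, condP p ht w y' else 0) =
      (if y ∈ validSet L ht w
      then condP p ht w y / ∑ y' ∈ validSet L ht w, condP p ht w y' else 0) := by
    intro y; simp [hpos]
  rw [Finset.sum_congr rfl fun y _ => this y, Finset.sum_ite_mem, Finset.univ_inter,
    ← Finset.sum_div, div_self (ne_of_gt hS)]

lemma main_induction (p : (Fin T → V) → ℝ) (hp0 : ∀ x, 0 ≤ p x) (hp1 : ∑ x, p x = 1)
    (L : Finset (Fin T → V)) (hL : L.Nonempty)
    (hnd : ∀ (t : ℕ) (ht : t + 1 ≤ T) (w : Fin t → V),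
      (∃ x ∈ L, PrefMatch (Nat.le_of_succ_le ht) w x) →
      0 < prefMass p (Nat.le_of_succ_le ht) w →
      0 < ∑ y ∈ validSet L ht w, condP p ht w y) :
    ∀ (t : ℕ) (ht : t ≤ T),
      (∀ w : Fin t → V, 0 < partialMu p L ht w →
        (∃ x ∈ L, PrefMatch ht w x) ∧ 0 < prefMass p ht w) ∧
      (∑ w : Fin t → V, partialMu p L ht w) = 1 := by
  intro t
  induction t with
  | zero =>
    intro ht
    constructor
    · intro w _
      obtain ⟨x0, hx0⟩ := hL
      refine ⟨⟨x0, hx0, fun i => i.elim0⟩, ?_⟩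
      have hall : ∀ x : Fin T → V, PrefMatch ht w x := fun x i => i.elim0
      have : prefMass p ht w = 1 := by
        unfold prefMass
        rw [Finset.sum_congr rfl fun x _ => if_pos (hall x), hp1]
      rw [this]; exact one_pos
    · have h1 : ∀ w : Fin 0 → V, partialMu p L ht w = 1 := by
        intro w; unfold partialMu; exact Finset.prod_of_isEmpty _
      rw [Finset.sum_congr rfl fun w _ => h1 w]
      simp
  | succ t ih =>
    intro ht
    have ht' : t ≤ T := Nat.le_of_succ_le ht
    obtain ⟨ihGood, ihSum⟩ := ih ht'
    have keyGood : ∀ (w : Fin t → V) (y : V), 0 < projKernel p L ht w y →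
        0 < partialMu p L ht' w →
        (∃ x ∈ L, PrefMatch ht (Fin.snoc w y) x) ∧ 0 < prefMass p ht (Fin.snoc w y) := by
      intro w y hK hpm
      have hcond : 0 < prefMass p (Nat.le_of_succ_le ht) w ∧ y ∈ validSet L ht w := by
        by_contra h
        rw [projKernel, if_neg h] at hK
        exact lt_irrefl 0 hK
      obtain ⟨hwpos, hyA⟩ := hcond
      have hex : ∃ x ∈ L, PrefMatch ht (Fin.snoc w y) x := by
        simpa [validSet] using hyA
      refine ⟨hex, ?_⟩
      have hexw : ∃ x ∈ L, PrefMatch (Nat.le_of_succ_le ht) w x := by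
        obtain ⟨x, hxL, hx⟩ := hex
        exact ⟨x, hxL, prefMatch_of_snoc ht w y x hx⟩
      have hS := hnd t ht w hexw hwpos
      have hKval : projKernel p L ht w y =
          condP p ht w y / ∑ y' ∈ validSet L ht w, condP p ht w y' := by
        rw [projKernel, if_pos ⟨hwpos, hyA⟩]
      rw [hKval] at hK
      have hcondpos : 0 < condP p ht w y := by
        by_contra h
        push_neg at h
        have : condP p ht w y = 0 := le_antisymm h (condP_nonneg p hp0 ht w y)
        rw [this, zero_div] at hK
        exact lt_irrefl 0 hK
      rw [condP] at hcondpos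
      by_contra h
      push_neg at h
      have hz : prefMass p ht (Fin.snoc w y) = 0 :=
        le_antisymm h (prefMass_nonneg p hp0 ht _)
      rw [hz, zero_div] at hcondpos
      exact lt_irrefl 0 hcondpos
    constructor
    · intro w' hpos
      have hsnoc : Fin.snoc (Fin.init w') (w' (Fin.last t)) = w' := Fin.snoc_init_self w'
      rw [← hsnoc, partialMu_succ] at hpos
      have h1 : 0 < partialMu p L ht' (Fin.init w') := by
        rcases (mul_pos_iff.mp hpos) with ⟨h, _⟩ | ⟨h, _⟩
        · exact h
        · exact absurd h (not_lt.mpr (partialMu_nonneg p hp0 L ht' _))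
      have h2 : 0 < projKernel p L ht (Fin.init w') (w' (Fin.last t)) := by
        rcases (mul_pos_iff.mp hpos) with ⟨_, h⟩ | ⟨_, h⟩
        · exact h
        · exact absurd h (not_lt.mpr (projKernel_nonneg p hp0 L ht _ _))
      have := keyGood _ _ h2 h1
      rwa [hsnoc] at this
    · have hre : (∑ w' : Fin (t + 1) → V, partialMu p L ht w') =
          ∑ z : V × (Fin t → V), partialMu p L ht (Fin.snoc z.2 z.1) := by
        refine (Fintype.sum_equiv (Fin.snocEquiv (fun _ => V)) _ _ fun z => ?_).symm
        rfl
      rw [hre, Fintype.sum_prod_type_right]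
      have : ∀ w : Fin t → V, (∑ y : V, partialMu p L ht (Fin.snoc w y)) =
          partialMu p L ht' w := by
        intro w
        have hrw : ∀ y : V, partialMu p L ht (Fin.snoc w y) =
            partialMu p L ht' w * projKernel p L ht w y := fun y => partialMu_succ p L ht w y
        rw [Finset.sum_congr rfl fun y _ => hrw y, ← Finset.mul_sum]
        rcases eq_or_lt_of_le (partialMu_nonneg p hp0 L ht' w) with h | h
        · rw [← h, zero_mul]
        · obtain ⟨hex, hpm⟩ := ihGood w h
          rw [kernel_sum_one p L ht w hpm (hnd t ht w hex hpm), mul_one]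
      rw [Finset.sum_congr rfl fun w _ => this w, ihSum]

end Aux

lemma muProj_eq_partialMu {V : Type*} [Fintype V] {T : ℕ} (p : (Fin T → V) → ℝ)
    (L : Finset (Fin T → V)) (x : Fin T → V) :
    muProj p L x = partialMu p L le_rfl x := rfl

/-- under the non-degeneracy assumption (every prefix of some
string of `L` that has positive `p`-mass and length less than `T` has positive
locally valid conditional mass), the locally projected sequence law `μ_proj`
is a probability mass function on `V^T` and is supported on `L`. -/
theorem stmt1 {V : Type*} [Fintype V] [Nonempty V] {T : ℕ} (hT : 1 ≤ T)
    (p : (Fin T → V) → ℝ) (hp0 : ∀ x, 0 ≤ p x) (hp1 : ∑ x, p x = 1)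
    (L : Finset (Fin T → V)) (hL : L.Nonempty)
    (hnd : ∀ (t : ℕ) (ht : t + 1 ≤ T) (w : Fin t → V),
      (∃ x ∈ L, PrefMatch (Nat.le_of_succ_le ht) w x) →
      0 < prefMass p (Nat.le_of_succ_le ht) w →
      0 < ∑ y ∈ validSet L ht w, condP p ht w y) :
    (∀ x, 0 ≤ muProj p L x) ∧
    (∑ x, muProj p L x = 1) ∧
    (∀ x, 0 < muProj p L x → x ∈ L) := by
  obtain ⟨hGood, hSum⟩ := main_induction p hp0 hp1 L hL hnd T le_rfl
  refine ⟨fun x => ?_, ?_, fun x hx => ?_⟩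
  · rw [muProj_eq_partialMu]
    exact partialMu_nonneg p hp0 L le_rfl x
  · rw [Finset.sum_congr rfl fun x _ => muProj_eq_partialMu p L x]
    exact hSum
  · rw [muProj_eq_partialMu] at hx
    obtain ⟨⟨x', hx'L, hx'⟩, _⟩ := hGood x hx
    have : x' = x := by
      funext i
      have := hx' i
      rwa [show Fin.castLE le_rfl i = i from Fin.ext rfl] at this
    rwa [this] at hx'L

end
end

section
/- If there exists δ ≥ 0 with |Φ̂(y) − Φ(y)| ≤ δ for all y ∈ A and δ < Φ̄, then Ẑ ≥ Z_p·(Φ̄ − δ) > 0, so μ̂ is well defined, and TV(μ̂, μ⋆) ≤ δ/(Φ̄ − δ). -/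
open Finset

/-- Φ-approximation fidelity: if `|Φ̂ y − Φ y| ≤ δ` for all `y ∈ A`
and `δ < Φ̄`, then `Ẑ ≥ Z_p·(Φ̄ − δ) > 0` (so `μ̂` is well defined) and
`TV(μ̂, μ⋆) ≤ δ/(Φ̄ − δ)`. -/
theorem stmt7 {A : Type*} [Fintype A] [Nonempty A]
    (p Φ Φhat : A → ℝ) (Zp Zs Φbar Zhat δ : ℝ)
    (hp : ∀ y, 0 ≤ p y) (hZp : Zp = ∑ y, p y) (hZppos : 0 < Zp)
    (hΦ : ∀ y, 0 ≤ Φ y ∧ Φ y ≤ 1) (hZs : Zs = ∑ y, p y * Φ y) (hZspos : 0 < Zs)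
    (hΦbar : Φbar = Zs / Zp)
    (hΦhat0 : ∀ y, 0 ≤ Φhat y) (hZhat : Zhat = ∑ y, p y * Φhat y)
    (hδ0 : 0 ≤ δ) (herr : ∀ y, |Φhat y - Φ y| ≤ δ) (hδ : δ < Φbar) :
    Zp * (Φbar - δ) ≤ Zhat ∧ 0 < Zp * (Φbar - δ) ∧
    (1/2) * ∑ y, |p y * Φhat y / Zhat - p y * Φ y / Zs| ≤ δ / (Φbar - δ) := by
  have hZpne : Zp ≠ 0 := ne_of_gt hZppos
  have hZsub : Zp * (Φbar - δ) = Zs - δ * Zp := by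
    rw [hΦbar]; field_simp
  have h1 : Zp * (Φbar - δ) ≤ Zhat := by
    rw [hZsub, hZs, hZp, hZhat, Finset.mul_sum, ← Finset.sum_sub_distrib]
    apply Finset.sum_le_sum
    intro y _
    have h := (abs_le.mp (herr y)).1
    nlinarith [hp y]
  have h2 : 0 < Zp * (Φbar - δ) := mul_pos hZppos (by linarith)
  have hZhatpos : 0 < Zhat := lt_of_lt_of_le h2 h1
  refine ⟨h1, h2, ?_⟩
  set D := |Zs - Zhat| with hDdef
  have hD0 : 0 ≤ D := abs_nonneg _
  have hD : D ≤ δ * Zp := by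
    have : Zs - Zhat = ∑ y, p y * (Φ y - Φhat y) := by
      rw [hZs, hZhat, ← Finset.sum_sub_distrib]; congr 1; ext y; ring
    rw [hDdef, this]
    calc |∑ y, p y * (Φ y - Φhat y)| ≤ ∑ y, |p y * (Φ y - Φhat y)| :=
          Finset.abs_sum_le_sum_abs _ _
      _ ≤ ∑ y, p y * δ := by
          apply Finset.sum_le_sum
          intro y _
          rw [abs_mul, abs_of_nonneg (hp y), abs_sub_comm]
          exact mul_le_mul_of_nonneg_left (herr y) (hp y)
      _ = δ * Zp := by rw [hZp, ← Finset.sum_mul]; ring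
  have hpt : ∀ y, |p y * Φhat y / Zhat - p y * Φ y / Zs| ≤
      (p y * δ * Zs + p y * Φ y * D) / (Zhat * Zs) := by
    intro y
    have hrw : p y * Φhat y / Zhat - p y * Φ y / Zs =
        p y * (Φhat y * Zs - Φ y * Zhat) / (Zhat * Zs) := by
      field_simp
    rw [hrw, abs_div, abs_of_pos (mul_pos hZhatpos hZspos), abs_mul,
      abs_of_nonneg (hp y)]
    gcongr
    have hX : |Φhat y * Zs - Φ y * Zhat| ≤ δ * Zs + Φ y * D := by
      have : Φhat y * Zs - Φ y * Zhat = (Φhat y - Φ y) * Zs + Φ y * (Zs - Zhat) := by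
        ring
      rw [this]
      calc |(Φhat y - Φ y) * Zs + Φ y * (Zs - Zhat)|
          ≤ |(Φhat y - Φ y) * Zs| + |Φ y * (Zs - Zhat)| := abs_add_le _ _
        _ ≤ δ * Zs + Φ y * D := by
            rw [abs_mul, abs_mul, abs_of_pos hZspos, abs_of_nonneg (hΦ y).1]
            exact add_le_add (mul_le_mul_of_nonneg_right (herr y) hZspos.le) le_rfl
    calc p y * |Φhat y * Zs - Φ y * Zhat| ≤ p y * (δ * Zs + Φ y * D) :=
          mul_le_mul_of_nonneg_left hX (hp y)
      _ = p y * δ * Zs + p y * Φ y * D := by ring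
  have hsum : ∑ y, |p y * Φhat y / Zhat - p y * Φ y / Zs| ≤ (δ * Zp + D) / Zhat := by
    calc ∑ y, |p y * Φhat y / Zhat - p y * Φ y / Zs|
        ≤ ∑ y, (p y * δ * Zs + p y * Φ y * D) / (Zhat * Zs) :=
          Finset.sum_le_sum fun y _ => hpt y
      _ = (δ * Zs * Zp + Zs * D) / (Zhat * Zs) := by
          rw [← Finset.sum_div]
          congr 1
          rw [Finset.sum_add_distrib]
          congr 1
          · rw [hZp, Finset.mul_sum]
            exact Finset.sum_congr rfl fun y _ => by ring
          · rw [hZs, Finset.sum_mul]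
      _ = (δ * Zp + D) / Zhat := by
          rw [div_eq_div_iff (mul_pos hZhatpos hZspos).ne' hZhatpos.ne']
          ring
  have hfinal : (δ * Zp + D) / Zhat ≤ 2 * δ / (Φbar - δ) := by
    have hnum : δ * Zp + D ≤ 2 * δ * Zp := by linarith
    calc (δ * Zp + D) / Zhat ≤ (2 * δ * Zp) / Zhat := by gcongr
      _ ≤ (2 * δ * Zp) / (Zp * (Φbar - δ)) := by
          apply div_le_div_of_nonneg_left (by positivity) h2 h1
      _ = 2 * δ / (Φbar - δ) := by
          rw [show 2 * δ * Zp = Zp * (2 * δ) by ring, mul_div_mul_left _ _ hZpne]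
  have := hsum.trans hfinal
  have hhalf : (1/2 : ℝ) * ∑ y, |p y * Φhat y / Zhat - p y * Φ y / Zs| ≤
      (1/2) * (2 * δ / (Φbar - δ)) := by
    apply mul_le_mul_of_nonneg_left this (by norm_num)
  calc (1/2 : ℝ) * ∑ y, |p y * Φhat y / Zhat - p y * Φ y / Zs|
      ≤ (1/2) * (2 * δ / (Φbar - δ)) := hhalf
    _ = δ / (Φbar - δ) := by ring
end

section
/- If there exists δ ≥ 0 with |Φ̂(y) − Φ(y)| ≤ δ for all y ∈ A and Ẑ > 0, then for every y ∈ A: |μ̂(y) − μ⋆(y)| ≤ p(y)·(Z⋆·δ + Φ(y)·δ·Z_p) / (Z⋆·Ẑ). -/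
open Finset

/-- pointwise perturbation bound: if `|Φ̂ y − Φ y| ≤ δ` for all
`y ∈ A` and `Ẑ > 0`, then for every `y`,
`|μ̂ y − μ⋆ y| ≤ p y·(Z⋆·δ + Φ y·δ·Z_p)/(Z⋆·Ẑ)`. -/
theorem stmt9 {A : Type*} [Fintype A] [Nonempty A]
    (p Φ Φhat : A → ℝ) (Zp Zs Zhat δ : ℝ)
    (hp : ∀ y, 0 ≤ p y) (hZp : Zp = ∑ y, p y) (hZppos : 0 < Zp)
    (hΦ : ∀ y, 0 ≤ Φ y ∧ Φ y ≤ 1) (hZs : Zs = ∑ y, p y * Φ y) (hZspos : 0 < Zs)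
    (hΦhat0 : ∀ y, 0 ≤ Φhat y) (hZhat : Zhat = ∑ y, p y * Φhat y)
    (hδ0 : 0 ≤ δ) (herr : ∀ y, |Φhat y - Φ y| ≤ δ) (hZhatpos : 0 < Zhat) :
    ∀ y, |p y * Φhat y / Zhat - p y * Φ y / Zs|
        ≤ p y * (Zs * δ + Φ y * δ * Zp) / (Zs * Zhat) := by
  have hZdiff : |Zhat - Zs| ≤ δ * Zp := by
    rw [hZhat, hZs, hZp, ← Finset.sum_sub_distrib, Finset.mul_sum]
    refine (Finset.abs_sum_le_sum_abs _ _).trans (Finset.sum_le_sum fun y _ => ?_)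
    rw [← mul_sub, abs_mul, abs_of_nonneg (hp y)]
    calc p y * |Φhat y - Φ y| ≤ p y * δ :=
          mul_le_mul_of_nonneg_left (herr y) (hp y)
      _ = δ * p y := mul_comm _ _
  intro y
  have key : p y * Φhat y / Zhat - p y * Φ y / Zs
      = p y * ((Φhat y - Φ y) * Zs + Φ y * (Zs - Zhat)) / (Zs * Zhat) := by
    field_simp
    ring
  rw [key]
  rw [abs_div, abs_of_pos (mul_pos hZspos hZhatpos), abs_mul, abs_of_nonneg (hp y)]
  apply div_le_div_of_nonneg_right ?hh (mul_pos hZspos hZhatpos).le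
  case hh =>
    apply mul_le_mul_of_nonneg_left ?_ (hp y)
    calc |(Φhat y - Φ y) * Zs + Φ y * (Zs - Zhat)|
        ≤ |(Φhat y - Φ y) * Zs| + |Φ y * (Zs - Zhat)| := abs_add_le _ _
      _ ≤ Zs * δ + Φ y * δ * Zp := by
          rw [abs_mul, abs_mul, abs_of_pos hZspos, abs_of_nonneg (hΦ y).1,
            abs_sub_comm Zs Zhat]
          have h1 : |Φhat y - Φ y| * Zs ≤ δ * Zs :=
            mul_le_mul_of_nonneg_right (herr y) hZspos.le
          have h2 : Φ y * |Zhat - Zs| ≤ Φ y * (δ * Zp) :=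
            mul_le_mul_of_nonneg_left hZdiff (hΦ y).1
          linarith
end

section
/- If there exists δ ≥ 0 with |Φ̂(y) − Φ(y)| ≤ δ for all y ∈ A and Ẑ > 0, then ∑_{y∈A} |μ̂(y) − μ⋆(y)| ≤ 2·δ·Z_p/Ẑ; equivalently, TV(μ̂, μ⋆) ≤ δ·Z_p/Ẑ. -/
open Finset

/-- if `|Φ̂ y − Φ y| ≤ δ` for all `y ∈ A` and `Ẑ > 0`, then
`∑_y |μ̂ y − μ⋆ y| ≤ 2·δ·Z_p/Ẑ`; equivalently `TV(μ̂, μ⋆) ≤ δ·Z_p/Ẑ`. -/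
theorem stmt10 {A : Type*} [Fintype A] [Nonempty A]
    (p Φ Φhat : A → ℝ) (Zp Zs Zhat δ : ℝ)
    (hp : ∀ y, 0 ≤ p y) (hZp : Zp = ∑ y, p y) (hZppos : 0 < Zp)
    (hΦ : ∀ y, 0 ≤ Φ y ∧ Φ y ≤ 1) (hZs : Zs = ∑ y, p y * Φ y) (hZspos : 0 < Zs)
    (hΦhat0 : ∀ y, 0 ≤ Φhat y) (hZhat : Zhat = ∑ y, p y * Φhat y)
    (hδ0 : 0 ≤ δ) (herr : ∀ y, |Φhat y - Φ y| ≤ δ) (hZhatpos : 0 < Zhat) :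
    (∑ y, |p y * Φhat y / Zhat - p y * Φ y / Zs| ≤ 2 * δ * Zp / Zhat) ∧
    (1/2) * ∑ y, |p y * Φhat y / Zhat - p y * Φ y / Zs| ≤ δ * Zp / Zhat := by
  have hZhatne : Zhat ≠ 0 := ne_of_gt hZhatpos
  have hZsne : Zs ≠ 0 := ne_of_gt hZspos
  -- |Zs - Zhat| ≤ δ * Zp
  have hdiff : |Zs - Zhat| ≤ δ * Zp := by
    have : Zs - Zhat = ∑ y, p y * (Φ y - Φhat y) := by
      rw [hZs, hZhat, ← Finset.sum_sub_distrib]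
      congr 1; ext y; ring
    rw [this]
    calc |∑ y, p y * (Φ y - Φhat y)| ≤ ∑ y, |p y * (Φ y - Φhat y)| :=
          Finset.abs_sum_le_sum_abs _ _
      _ ≤ ∑ y, p y * δ := by
          apply Finset.sum_le_sum
          intro y _
          rw [abs_mul, abs_of_nonneg (hp y), abs_sub_comm]
          exact mul_le_mul_of_nonneg_left (herr y) (hp y)
      _ = δ * Zp := by rw [← Finset.sum_mul, ← hZp]; ring
  have key : ∑ y, |p y * Φhat y / Zhat - p y * Φ y / Zs| ≤ 2 * δ * Zp / Zhat := by
    have hbound : ∀ y : A, |p y * Φhat y / Zhat - p y * Φ y / Zs|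
        ≤ p y * |Φhat y - Φ y| / Zhat + p y * Φ y * |Zs - Zhat| / (Zhat * Zs) := by
      intro y
      have heq : p y * Φhat y / Zhat - p y * Φ y / Zs
          = p y * (Φhat y - Φ y) / Zhat + p y * Φ y * (Zs - Zhat) / (Zhat * Zs) := by
        field_simp; ring
      rw [heq]
      refine (abs_add_le _ _).trans (le_of_eq ?_)
      rw [abs_div, abs_div, abs_mul, abs_mul, abs_mul,
        abs_of_nonneg (hp y), abs_of_nonneg (hΦ y).1,
        abs_of_pos hZhatpos, abs_mul, abs_of_pos hZhatpos, abs_of_pos hZspos]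
    calc ∑ y, |p y * Φhat y / Zhat - p y * Φ y / Zs|
        ≤ ∑ y, (p y * |Φhat y - Φ y| / Zhat + p y * Φ y * |Zs - Zhat| / (Zhat * Zs)) :=
          Finset.sum_le_sum (fun y _ => hbound y)
      _ = (∑ y, p y * |Φhat y - Φ y|) / Zhat
            + (∑ y, p y * Φ y) * |Zs - Zhat| / (Zhat * Zs) := by
          rw [Finset.sum_add_distrib, ← Finset.sum_div, ← Finset.sum_div, ← Finset.sum_mul]
      _ ≤ (δ * Zp) / Zhat + Zs * (δ * Zp) / (Zhat * Zs) := by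
          gcongr
          · calc ∑ y, p y * |Φhat y - Φ y| ≤ ∑ y, p y * δ :=
                Finset.sum_le_sum (fun y _ => mul_le_mul_of_nonneg_left (herr y) (hp y))
              _ = δ * Zp := by rw [← Finset.sum_mul, ← hZp]; ring
          · rw [← hZs]
      _ = 2 * δ * Zp / Zhat := by field_simp; ring
  refine ⟨key, ?_⟩
  have h := mul_le_mul_of_nonneg_left key (by norm_num : (0:ℝ) ≤ 1/2)
  have he : 1/2 * (2 * δ * Zp / Zhat) = δ * Zp / Zhat := by ring
  linarith
end

section
/- Fix k ≥ 1 and α ∈ (0,1], and set ε_k = √(ln(2·|A|/α)/(2k)). If ε_k < Φ̄, then with probability at least 1 − α the following hold simultaneously: |Φ̂(y) − Φ(y)| ≤ ε_k for every y ∈ A; Ẑ ≥ Z_p·(Φ̄ − ε_k) > 0 (so μ̂ is well defined); and TV(μ̂, μ⋆) ≤ ε_k/(Φ̄ − ε_k). -/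
open Finset MeasureTheory ProbabilityTheory
open scoped Classical ENNReal



lemma upos {p : ℝ} (hp0 : 0 ≤ p) (hp1 : p ≤ 1) (t : ℝ) : 0 < 1 - p + p * Real.exp t := by
  rcases lt_or_ge p 1 with h | h
  · have := mul_nonneg hp0 (Real.exp_pos t).le
    linarith
  · have hp : p = 1 := le_antisymm hp1 h
    simp [hp, Real.exp_pos t]

lemma bernoulli_hoeffding {p : ℝ} (hp0 : 0 ≤ p) (hp1 : p ≤ 1) (t : ℝ) :
    (1 - p) * Real.exp (-(t * p)) + p * Real.exp (t * (1 - p)) ≤ Real.exp (t ^ 2 / 8) := by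
  set u : ℝ → ℝ := fun s => 1 - p + p * Real.exp s with hu
  have hupos : ∀ s, 0 < u s := fun s => upos hp0 hp1 s
  set h : ℝ → ℝ := fun s => s ^ 2 / 8 + p * s - Real.log (u s) with hh
  set h' : ℝ → ℝ := fun s => s / 4 + p - p * Real.exp s / u s with hh'
  have hud : ∀ s, HasDerivAt u (p * Real.exp s) s := by
    intro s
    exact ((Real.hasDerivAt_exp s).const_mul p).const_add (1 - p)
  have hd1 : ∀ s, HasDerivAt h (h' s) s := by
    intro s
    have h1 : HasDerivAt (fun x : ℝ => x ^ 2 / 8 + p * x) (s / 4 + p) s := by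
      have := ((hasDerivAt_pow 2 s).div_const 8).add ((hasDerivAt_id s).const_mul p)
      exact this.congr_deriv (by ring)
    exact h1.sub ((hud s).log (hupos s).ne')
  have hd2 : ∀ s, HasDerivAt h'
      (1 / 4 - (p * Real.exp s * u s - p * Real.exp s * (p * Real.exp s)) / (u s) ^ 2) s := by
    intro s
    have h1 : HasDerivAt (fun x : ℝ => x / 4 + p) (1 / 4) s := by
      simpa using ((hasDerivAt_id s).div_const 4).add_const p
    have h2 : HasDerivAt (fun x => p * Real.exp x / u x)
        ((p * Real.exp s * u s - p * Real.exp s * (p * Real.exp s)) / (u s) ^ 2) s :=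
      ((Real.hasDerivAt_exp s).const_mul p).div (hud s) (hupos s).ne'
    exact h1.sub h2
  have h2nonneg : ∀ s, 0 ≤ 1 / 4 -
      (p * Real.exp s * u s - p * Real.exp s * (p * Real.exp s)) / (u s) ^ 2 := by
    intro s
    rw [sub_nonneg, div_le_iff₀ (by have := hupos s; positivity)]
    have hus : u s = 1 - p + p * Real.exp s := rfl
    nlinarith [sq_nonneg (1 - p - p * Real.exp s), hupos s]
  have hmono' : Monotone h' := by
    apply monotone_of_deriv_nonneg (fun s => (hd2 s).differentiableAt)
    intro s
    rw [(hd2 s).deriv]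
    exact h2nonneg s
  have h'0 : h' 0 = 0 := by simp [hh', hu]
  have h0 : h 0 = 0 := by simp [hh, hu]
  have hkey : ∀ s, 0 ≤ h s := by
    intro s
    rcases le_or_gt 0 s with hs | hs
    · have : MonotoneOn h (Set.Ici 0) := by
        apply monotoneOn_of_deriv_nonneg (convex_Ici 0)
          (fun x _ => (hd1 x).differentiableAt.continuousAt.continuousWithinAt)
          (fun x _ => (hd1 x).differentiableAt.differentiableWithinAt)
        intro x hx
        rw [(hd1 x).deriv, ← h'0]
        exact hmono' (le_of_lt (by simpa using hx))
      have := this (Set.self_mem_Ici) (Set.mem_Ici.2 hs) hs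
      linarith [h0 ▸ this]
    · have : AntitoneOn h (Set.Iic 0) := by
        apply antitoneOn_of_deriv_nonpos (convex_Iic 0)
          (fun x _ => (hd1 x).differentiableAt.continuousAt.continuousWithinAt)
          (fun x _ => (hd1 x).differentiableAt.differentiableWithinAt)
        intro x hx
        rw [(hd1 x).deriv, ← h'0]
        exact hmono' (le_of_lt (by simpa using hx))
      have := this (Set.mem_Iic.2 hs.le) (Set.self_mem_Iic) hs.le
      linarith [h0 ▸ this]
  have hlog : Real.log (u t) ≤ t ^ 2 / 8 + p * t := by
    have := hkey t
    simp only [hh] at this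
    linarith
  have heq : (1 - p) * Real.exp (-(t * p)) + p * Real.exp (t * (1 - p))
      = Real.exp (-(t * p)) * u t := by
    have : Real.exp (t * (1 - p)) = Real.exp t * Real.exp (-(t * p)) := by
      rw [← Real.exp_add]; ring_nf
    rw [this, hu]; ring
  rw [heq, ← Real.exp_log (hupos t), ← Real.exp_add]
  apply Real.exp_le_exp.2
  linarith

section bern
variable {Ω : Type*} [MeasurableSpace Ω] (P : Measure Ω) [IsProbabilityMeasure P]

lemma bern_repr {X : Ω → ℝ} (hval : ∀ ω, X ω = 0 ∨ X ω = 1) :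
    X = Set.indicator {ω | X ω = 1} (1 : Ω → ℝ) := by
  funext ω
  rcases hval ω with h | h <;> simp [Set.indicator, h]

lemma bern_integrable {X : Ω → ℝ} (hm : Measurable X) (hval : ∀ ω, X ω = 0 ∨ X ω = 1) :
    Integrable X P := by
  rw [bern_repr hval]
  exact (integrable_indicator_iff (measurableSet_eq_fun hm measurable_const)).2
    (integrableOn_const (measure_ne_top _ _))

lemma bern_integral {X : Ω → ℝ} (hm : Measurable X) (hval : ∀ ω, X ω = 0 ∨ X ω = 1)
    {p : ℝ} (hp0 : 0 ≤ p) (hmean : P {ω | X ω = 1} = ENNReal.ofReal p) :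
    ∫ ω, X ω ∂P = p := by
  conv_lhs => rw [show (fun ω => X ω) = X from rfl, bern_repr hval]
  rw [integral_indicator_one (measurableSet_eq_fun hm measurable_const), measureReal_def, hmean,
    ENNReal.toReal_ofReal hp0]

lemma bern_exp_repr {X : Ω → ℝ} (hval : ∀ ω, X ω = 0 ∨ X ω = 1) (p t : ℝ) :
    (fun ω => Real.exp (t * (X ω - p)))
      = fun ω => Real.exp (-(t * p)) + (Real.exp (t * (1 - p)) - Real.exp (-(t * p))) * X ω := by
  funext ω
  rcases hval ω with h | h <;> simp [h]

lemma bern_exp_integrable {X : Ω → ℝ} (hm : Measurable X) (hval : ∀ ω, X ω = 0 ∨ X ω = 1)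
    (p t : ℝ) : Integrable (fun ω => Real.exp (t * (X ω - p))) P := by
  rw [bern_exp_repr hval p t]
  exact (integrable_const _).add ((bern_integrable P hm hval).const_mul _)

lemma bern_mgf {X : Ω → ℝ} (hm : Measurable X) (hval : ∀ ω, X ω = 0 ∨ X ω = 1)
    {p : ℝ} (hp0 : 0 ≤ p) (hmean : P {ω | X ω = 1} = ENNReal.ofReal p) (t : ℝ) :
    mgf (fun ω => X ω - p) P t
      = (1 - p) * Real.exp (-(t * p)) + p * Real.exp (t * (1 - p)) := by
  unfold mgf
  rw [show (fun ω => Real.exp (t * (fun ω => X ω - p) ω)) = fun ω => Real.exp (t * (X ω - p))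
      from rfl, bern_exp_repr hval p t,
    integral_add (integrable_const _) ((bern_integrable P hm hval).const_mul _),
    integral_const, integral_const_mul, bern_integral P hm hval hp0 hmean]
  simp
  ring
end bern

lemma chernoff_pair {A : Type*} [Fintype A]
    {Ω : Type*} [MeasurableSpace Ω] (P : Measure Ω) [IsProbabilityMeasure P]
    (k : ℕ) (Φ : A → ℝ) (hΦ : ∀ y, 0 ≤ Φ y ∧ Φ y ≤ 1)
    (B : A × Fin k → Ω → ℝ)
    (hBmeas : ∀ i, Measurable (B i))
    (hBind : ProbabilityTheory.iIndepFun B P)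
    (hBval : ∀ i ω, B i ω = 0 ∨ B i ω = 1)
    (hBmean : ∀ i, P {ω | B i ω = 1} = ENNReal.ofReal (Φ i.1))
    (y : A) (ε : ℝ) (hε : 0 ≤ ε) :
    P {ω | (k:ℝ) * ε ≤ (∑ j, B (y,j) ω) - k * Φ y}
        ≤ ENNReal.ofReal (Real.exp (-(2 * k * ε ^ 2)))
    ∧ P {ω | (∑ j, B (y,j) ω) - k * Φ y ≤ -((k:ℝ) * ε)}
        ≤ ENNReal.ofReal (Real.exp (-(2 * k * ε ^ 2))) := by
  set C : A × Fin k → Ω → ℝ := fun i ω => B i ω - Φ i.1 with hC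
  have hCmeas : ∀ i, Measurable (C i) := fun i => (hBmeas i).sub measurable_const
  have hCind : ProbabilityTheory.iIndepFun C P :=
    hBind.comp (fun i x => x - Φ i.1) (fun i => measurable_id.sub measurable_const)
  set s : Finset (A × Fin k) := ({y} : Finset A) ×ˢ (Finset.univ : Finset (Fin k)) with hs
  have hcard : s.card = k := by simp [hs]
  have hsum : ∀ ω, (∑ i ∈ s, C i) ω = (∑ j, B (y,j) ω) - k * Φ y := by
    intro ω
    rw [Finset.sum_apply, hs, Finset.sum_product, Finset.sum_singleton]
    simp [hC, Finset.sum_sub_distrib, mul_comm]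
  have hint : ∀ (t : ℝ) i, Integrable (fun ω => Real.exp (t * C i ω)) P := fun t i =>
    bern_exp_integrable P (hBmeas i) (hBval i) (Φ i.1) t
  have hintS : ∀ t : ℝ, Integrable (fun ω => Real.exp (t * (∑ i ∈ s, C i) ω)) P := fun t =>
    hCind.integrable_exp_mul_sum hCmeas (fun i _ => hint t i)
  have hmgf : ∀ t : ℝ, mgf (∑ i ∈ s, C i) P t ≤ Real.exp ((k:ℝ) * t ^ 2 / 8) := by
    intro t
    rw [hCind.mgf_sum hCmeas s]
    have hb : ∀ i ∈ s, mgf (C i) P t ≤ Real.exp (t ^ 2 / 8) := by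
      intro i _
      rw [show C i = fun ω => B i ω - Φ i.1 from rfl,
        bern_mgf P (hBmeas i) (hBval i) (hΦ i.1).1 (hBmean i) t]
      exact bernoulli_hoeffding (hΦ i.1).1 (hΦ i.1).2 t
    calc ∏ i ∈ s, mgf (C i) P t ≤ ∏ _i ∈ s, Real.exp (t ^ 2 / 8) :=
          Finset.prod_le_prod (fun i _ => mgf_nonneg) hb
      _ = Real.exp (t ^ 2 / 8) ^ k := by rw [Finset.prod_const, hcard]
      _ = Real.exp ((k:ℝ) * t ^ 2 / 8) := by
          rw [← Real.exp_nat_mul]; ring_nf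
  have key : ∀ (S : Set Ω) (t : ℝ), (P S).toReal ≤ Real.exp t → P S ≤ ENNReal.ofReal (Real.exp t) := by
    intro S t h
    rw [← ENNReal.ofReal_toReal (measure_ne_top P S)]
    exact ENNReal.ofReal_le_ofReal h
  constructor
  · apply key
    have h1 := measure_ge_le_exp_mul_mgf (μ := P) (X := ∑ i ∈ s, C i) ((k:ℝ) * ε)
      (t := 4 * ε) (by positivity) (hintS _)
    have h2 : {ω | (k:ℝ) * ε ≤ (∑ j, B (y,j) ω) - k * Φ y}
        = {ω | (k:ℝ) * ε ≤ (∑ i ∈ s, C i) ω} := by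
      ext ω; rw [Set.mem_setOf_eq, Set.mem_setOf_eq, hsum ω]
    rw [h2]
    calc (P {ω | (k:ℝ) * ε ≤ (∑ i ∈ s, C i) ω}).toReal
        ≤ Real.exp (-(4 * ε) * ((k:ℝ) * ε)) * mgf (∑ i ∈ s, C i) P (4 * ε) := h1
      _ ≤ Real.exp (-(4 * ε) * ((k:ℝ) * ε)) * Real.exp ((k:ℝ) * (4 * ε) ^ 2 / 8) := by
          exact mul_le_mul_of_nonneg_left (hmgf _) (Real.exp_pos _).le
      _ = Real.exp (-(2 * k * ε ^ 2)) := by rw [← Real.exp_add]; ring_nf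
  · apply key
    have h1 := measure_le_le_exp_mul_mgf (μ := P) (X := ∑ i ∈ s, C i) (-((k:ℝ) * ε))
      (t := -(4 * ε)) (by simp; positivity) (hintS _)
    have h2 : {ω | (∑ j, B (y,j) ω) - k * Φ y ≤ -((k:ℝ) * ε)}
        = {ω | (∑ i ∈ s, C i) ω ≤ -((k:ℝ) * ε)} := by
      ext ω; rw [Set.mem_setOf_eq, Set.mem_setOf_eq, hsum ω]
    rw [h2]
    calc (P {ω | (∑ i ∈ s, C i) ω ≤ -((k:ℝ) * ε)}).toReal
        ≤ Real.exp (-(-(4 * ε)) * -((k:ℝ) * ε)) * mgf (∑ i ∈ s, C i) P (-(4 * ε)) := h1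
      _ ≤ Real.exp (-(-(4 * ε)) * -((k:ℝ) * ε)) * Real.exp ((k:ℝ) * (-(4 * ε)) ^ 2 / 8) := by
          exact mul_le_mul_of_nonneg_left (hmgf _) (Real.exp_pos _).le
      _ = Real.exp (-(2 * k * ε ^ 2)) := by rw [← Real.exp_add]; ring_nf



lemma det_lemma {A : Type*} [Fintype A] [Nonempty A]
    (p Φ : A → ℝ) (Zp Zs Φbar : ℝ)
    (hp : ∀ y, 0 ≤ p y) (hZp : Zp = ∑ y, p y) (hZppos : 0 < Zp)
    (hΦ : ∀ y, 0 ≤ Φ y ∧ Φ y ≤ 1) (hZs : Zs = ∑ y, p y * Φ y) (hZspos : 0 < Zs)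
    (hΦbar : Φbar = Zs / Zp)
    (ε : ℝ) (hε : 0 ≤ ε) (hεΦ : ε < Φbar)
    (f : A → ℝ) (hf : ∀ y, |f y - Φ y| ≤ ε) :
    (Zp * (Φbar - ε) ≤ ∑ y, p y * f y ∧ 0 < Zp * (Φbar - ε)) ∧
    (1/2) * ∑ y, |p y * f y / (∑ d, p d * f d) - p y * Φ y / Zs| ≤ ε / (Φbar - ε) := by
  have hZpne : Zp ≠ 0 := hZppos.ne'
  have hZZ : Zp * (Φbar - ε) = Zs - ε * Zp := by
    rw [hΦbar]; field_simp
  set Zh : ℝ := ∑ y, p y * f y with hZh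
  have hlow : Zs - ε * Zp ≤ Zh := by
    rw [hZs, hZp, hZh, Finset.mul_sum, ← Finset.sum_sub_distrib]
    apply Finset.sum_le_sum
    intro y _
    have h1 := abs_le.1 (hf y)
    nlinarith [hp y, h1.1]
  have hpos : 0 < Zp * (Φbar - ε) := mul_pos hZppos (by linarith)
  have hZhpos : 0 < Zh := lt_of_lt_of_le (hZZ ▸ hpos) hlow
  refine ⟨⟨hZZ ▸ hlow, hpos⟩, ?_⟩
  have hdiff : |Zs - Zh| ≤ ε * Zp := by
    rw [hZs, hZh, ← Finset.sum_sub_distrib]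
    calc |∑ y, (p y * Φ y - p y * f y)| ≤ ∑ y, |p y * Φ y - p y * f y| :=
          Finset.abs_sum_le_sum_abs _ _
      _ ≤ ∑ y, ε * p y := by
          apply Finset.sum_le_sum
          intro y _
          rw [← mul_sub, abs_mul, abs_of_nonneg (hp y)]
          rw [abs_sub_comm]
          exact mul_le_mul_of_nonneg_left (hf y) (hp y) |>.trans_eq (mul_comm _ _)
      _ = ε * Zp := by rw [hZp, Finset.mul_sum]
  have hterm : ∀ y, |p y * f y / Zh - p y * Φ y / Zs|
      ≤ p y * ε / Zh + p y * Φ y * |Zs - Zh| / (Zh * Zs) := by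
    intro y
    have h1 : |p y * f y / Zh - p y * Φ y / Zh| = p y * |f y - Φ y| / Zh := by
      rw [div_sub_div_same, abs_div, ← mul_sub, abs_mul, abs_of_nonneg (hp y),
        abs_of_pos hZhpos]
    have h2 : |p y * Φ y / Zh - p y * Φ y / Zs| = p y * Φ y * |Zs - Zh| / (Zh * Zs) := by
      rw [div_sub_div _ _ hZhpos.ne' hZspos.ne', abs_div,
        abs_of_pos (mul_pos hZhpos hZspos)]
      congr 1
      rw [show p y * Φ y * Zs - Zh * (p y * Φ y) = p y * Φ y * (Zs - Zh) by ring, abs_mul,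
        abs_of_nonneg (mul_nonneg (hp y) (hΦ y).1)]
    calc |p y * f y / Zh - p y * Φ y / Zs|
        ≤ |p y * f y / Zh - p y * Φ y / Zh| + |p y * Φ y / Zh - p y * Φ y / Zs| :=
          abs_sub_le _ _ _
      _ ≤ p y * ε / Zh + p y * Φ y * |Zs - Zh| / (Zh * Zs) := by
          rw [h1, h2]
          gcongr
          · exact hp y
          · exact hf y
  have hsumbound : ∑ y, |p y * f y / Zh - p y * Φ y / Zs| ≤ 2 * (ε * Zp) / Zh := by
    calc ∑ y, |p y * f y / Zh - p y * Φ y / Zs|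
        ≤ ∑ y, (p y * ε / Zh + p y * Φ y * |Zs - Zh| / (Zh * Zs)) :=
          Finset.sum_le_sum (fun y _ => hterm y)
      _ = (∑ y, p y) * ε / Zh + (∑ y, p y * Φ y) * |Zs - Zh| / (Zh * Zs) := by
          rw [Finset.sum_add_distrib, ← Finset.sum_div, ← Finset.sum_div,
            ← Finset.sum_mul, ← Finset.sum_mul]
      _ = Zp * ε / Zh + |Zs - Zh| / Zh := by
          rw [← hZp, ← hZs]
          congr 1
          rw [mul_comm Zh Zs, ← div_div]
          congr 1
          rw [mul_comm, mul_div_assoc, div_self hZspos.ne', mul_one]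
      _ ≤ Zp * ε / Zh + (ε * Zp) / Zh := by gcongr
      _ = 2 * (ε * Zp) / Zh := by ring
  have hfinal : 2 * (ε * Zp) / Zh ≤ 2 * ε / (Φbar - ε) := by
    have h1 : 2 * (ε * Zp) / Zh ≤ 2 * (ε * Zp) / (Zp * (Φbar - ε)) :=
      div_le_div_of_nonneg_left (by positivity) hpos (hZZ ▸ hlow)
    have h2 : 2 * (ε * Zp) / (Zp * (Φbar - ε)) = 2 * ε / (Φbar - ε) := by
      rw [div_eq_div_iff hpos.ne' (show Φbar - ε ≠ 0 by linarith)]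
      ring
    linarith [h1.trans_eq h2]
  have h3 : 2 * ε / (Φbar - ε) = 2 * (ε / (Φbar - ε)) := by ring
  linarith [hsumbound.trans hfinal]

/-- Monte Carlo estimator guarantee: let `Φ̂(y)` be the average
of `k` i.i.d. Bernoulli(`Φ y`) samples, mutually independent over all `y` and
repetitions, and set `ε_k = √(ln(2|A|/α)/(2k))`. If `ε_k < Φ̄`, then with
probability at least `1 − α`: every `y` satisfies `|Φ̂ y − Φ y| ≤ ε_k`,
`Ẑ ≥ Z_p·(Φ̄ − ε_k) > 0` (so `μ̂` is well defined), and
`TV(μ̂, μ⋆) ≤ ε_k/(Φ̄ − ε_k)`. -/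
theorem stmt16 {A : Type*} [Fintype A] [Nonempty A]
    {Ω : Type*} [MeasurableSpace Ω] (P : Measure Ω) [IsProbabilityMeasure P]
    (p Φ : A → ℝ) (Zp Zs Φbar : ℝ)
    (hp : ∀ y, 0 ≤ p y) (hZp : Zp = ∑ y, p y) (hZppos : 0 < Zp)
    (hΦ : ∀ y, 0 ≤ Φ y ∧ Φ y ≤ 1) (hZs : Zs = ∑ y, p y * Φ y) (hZspos : 0 < Zs)
    (hΦbar : Φbar = Zs / Zp)
    (k : ℕ) (hk : 1 ≤ k) (α : ℝ) (hα0 : 0 < α) (hα1 : α ≤ 1)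
    (B : A × Fin k → Ω → ℝ)
    (hBmeas : ∀ i, Measurable (B i))
    (hBind : ProbabilityTheory.iIndepFun B P)
    (hBval : ∀ i ω, B i ω = 0 ∨ B i ω = 1)
    (hBmean : ∀ i, P {ω | B i ω = 1} = ENNReal.ofReal (Φ i.1))
    (Φhat : A → Ω → ℝ)
    (hΦhat : ∀ y ω, Φhat y ω = (1 / (k : ℝ)) * ∑ j : Fin k, B (y, j) ω)
    (εk : ℝ)
    (hεk : εk = Real.sqrt (Real.log (2 * (Fintype.card A : ℝ) / α) / (2 * (k : ℝ))))
    (hεΦ : εk < Φbar) :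
    ENNReal.ofReal (1 - α) ≤
      P {ω | (∀ y, |Φhat y ω - Φ y| ≤ εk) ∧
             (Zp * (Φbar - εk) ≤ ∑ y, p y * Φhat y ω ∧ 0 < Zp * (Φbar - εk)) ∧
             (1/2) * ∑ y, |p y * Φhat y ω / (∑ d, p d * Φhat d ω) - p y * Φ y / Zs|
               ≤ εk / (Φbar - εk)} := by
  set n : ℕ := Fintype.card A with hn
  have hn1 : 1 ≤ (n : ℝ) := by
    have : 1 ≤ n := Fintype.card_pos
    exact_mod_cast this
  have hk1 : 1 ≤ (k : ℝ) := by exact_mod_cast hk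
  have hkpos : (0:ℝ) < k := by linarith
  have hratio : (1:ℝ) ≤ 2 * n / α := by
    rw [le_div_iff₀ hα0]
    linarith
  have hεnonneg : 0 ≤ εk := hεk ▸ Real.sqrt_nonneg _
  have hεsq : εk ^ 2 = Real.log (2 * n / α) / (2 * k) := by
    rw [hεk, Real.sq_sqrt]
    exact div_nonneg (Real.log_nonneg hratio) (by positivity)
  have hexp : Real.exp (-(2 * k * εk ^ 2)) = α / (2 * n) := by
    have h1 : 2 * (k:ℝ) * εk ^ 2 = Real.log (2 * n / α) := by
      rw [hεsq]; field_simp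
    rw [h1, Real.exp_neg, Real.exp_log (by positivity), inv_div]
  -- measurability of Φhat
  have hΦhatmeas : ∀ y, Measurable (Φhat y) := by
    intro y
    have : Φhat y = fun ω => (1 / (k : ℝ)) * ∑ j : Fin k, B (y, j) ω := funext (hΦhat y)
    rw [this]
    exact (Finset.measurable_sum Finset.univ fun j _ => hBmeas (y, j)).const_mul _
  set E : Set Ω := ⋂ y, {ω | |Φhat y ω - Φ y| ≤ εk} with hE
  have hEmeas : MeasurableSet E :=
    MeasurableSet.iInter fun y =>
      measurableSet_le ((hΦhatmeas y).sub measurable_const).abs measurable_const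
  -- bound on complement
  have hcompl : P Eᶜ ≤ ENNReal.ofReal α := by
    have hEc : Eᶜ = ⋃ y, {ω | |Φhat y ω - Φ y| ≤ εk}ᶜ := by
      rw [hE, Set.compl_iInter]
    rw [hEc]
    have hbady : ∀ y : A, P ({ω | |Φhat y ω - Φ y| ≤ εk}ᶜ)
        ≤ ENNReal.ofReal (2 * Real.exp (-(2 * k * εk ^ 2))) := by
      intro y
      have hsub : ({ω | |Φhat y ω - Φ y| ≤ εk}ᶜ : Set Ω) ⊆
          {ω | (k:ℝ) * εk ≤ (∑ j, B (y,j) ω) - k * Φ y}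
          ∪ {ω | (∑ j, B (y,j) ω) - k * Φ y ≤ -((k:ℝ) * εk)} := by
        intro ω hω
        simp only [Set.mem_compl_iff, Set.mem_setOf_eq, not_le] at hω
        have hfe : (∑ j, B (y,j) ω) - k * Φ y = k * (Φhat y ω - Φ y) := by
          rw [hΦhat y ω]
          field_simp
        rcases lt_abs.mp hω with h | h
        · left
          show (k:ℝ) * εk ≤ (∑ j, B (y,j) ω) - k * Φ y
          rw [hfe]
          have := mul_le_mul_of_nonneg_left h.le hkpos.le
          linarith
        · right
          show (∑ j, B (y,j) ω) - k * Φ y ≤ -((k:ℝ) * εk)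
          rw [hfe]
          have := mul_le_mul_of_nonneg_left h.le hkpos.le
          nlinarith
      have h2 := chernoff_pair P k Φ hΦ B hBmeas hBind hBval hBmean y εk hεnonneg
      calc P ({ω | |Φhat y ω - Φ y| ≤ εk}ᶜ)
          ≤ P ({ω | (k:ℝ) * εk ≤ (∑ j, B (y,j) ω) - k * Φ y}
              ∪ {ω | (∑ j, B (y,j) ω) - k * Φ y ≤ -((k:ℝ) * εk)}) := measure_mono hsub
        _ ≤ P {ω | (k:ℝ) * εk ≤ (∑ j, B (y,j) ω) - k * Φ y}
              + P {ω | (∑ j, B (y,j) ω) - k * Φ y ≤ -((k:ℝ) * εk)} := measure_union_le _ _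
        _ ≤ ENNReal.ofReal (Real.exp (-(2 * k * εk ^ 2)))
              + ENNReal.ofReal (Real.exp (-(2 * k * εk ^ 2))) := add_le_add h2.1 h2.2
        _ = ENNReal.ofReal (2 * Real.exp (-(2 * k * εk ^ 2))) := by
            rw [← ENNReal.ofReal_add (Real.exp_pos _).le (Real.exp_pos _).le]
            congr 1
            ring
    calc P (⋃ y, {ω | |Φhat y ω - Φ y| ≤ εk}ᶜ)
        ≤ ∑ y : A, P ({ω | |Φhat y ω - Φ y| ≤ εk}ᶜ) := measure_iUnion_fintype_le _ _
      _ ≤ ∑ y : A, ENNReal.ofReal (2 * Real.exp (-(2 * k * εk ^ 2))) :=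
          Finset.sum_le_sum fun y (_ : y ∈ Finset.univ) => hbady y
      _ = (n : ℝ≥0∞) * ENNReal.ofReal (2 * Real.exp (-(2 * k * εk ^ 2))) := by
          rw [Finset.sum_const, Finset.card_univ, nsmul_eq_mul]
      _ = ENNReal.ofReal ((n:ℝ) * (2 * Real.exp (-(2 * k * εk ^ 2)))) := by
          rw [ENNReal.ofReal_mul (show (0:ℝ) ≤ (n:ℝ) by positivity),
            ENNReal.ofReal_natCast]
      _ = ENNReal.ofReal α := by
          congr 1
          rw [hexp]
          field_simp
  -- from complement bound to E bound
  have hPE : ENNReal.ofReal (1 - α) ≤ P E := by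
    have h1 : P E = 1 - P Eᶜ := by
      have := prob_compl_eq_one_sub (μ := P) hEmeas.compl
      rwa [compl_compl] at this
    have h2 : ENNReal.ofReal (1 - α) = 1 - ENNReal.ofReal α := by
      rw [ENNReal.ofReal_sub _ hα0.le, ENNReal.ofReal_one]
    rw [h1, h2]
    exact tsub_le_tsub_left hcompl 1
  refine le_trans hPE (measure_mono ?_)
  intro ω hω
  have hf : ∀ y, |Φhat y ω - Φ y| ≤ εk := by
    intro y
    have := Set.mem_iInter.mp hω y
    exact this
  have hd := det_lemma p Φ Zp Zs Φbar hp hZp hZppos hΦ hZs hZspos hΦbar εk hεnonneg hεΦ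
    (fun y => Φhat y ω) hf
  exact ⟨hf, hd.1, hd.2⟩
end
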